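/- arXiv:2507.03140 — 3 statements merged into one kernel-verified Lean document; each statement's English description precedes it below -/
import Mathlib

section
/- Fix γ > 0 and t ∈ ℝ. For η ∈ (0, γ) let Γ_η be the contour consisting of the vertical segment from −η − iγ to −η, the semicircular arc {η e^{iθ} : θ ∈ [0, π]} traversed from −η to η through iη, and the vertical segment from η to η − iγ. Then lim_{η→0⁺} ∫_{Γ_η} e^{−itλ} λ^{−2} dλ = −2πt; equivalently, (1/(2π)) lim_{η→0⁺} ∫_{Γ_η} e^{−itλ} λ^{−2} dλ = −t. -/
open Filter

open intervalIntegral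

noncomputable def gg (t : ℝ) (z : ℂ) : ℂ :=
  (Complex.exp (-Complex.I * t * z) - 1 + Complex.I * t * z) * z ^ (-2 : ℤ)

lemma zpow_neg_two_eq {z : ℂ} : z ^ (-2 : ℤ) = (z ^ 2)⁻¹ := by
  rw [zpow_neg]; norm_cast

lemma zmul_key {z : ℂ} (hz : z ≠ 0) : z * z ^ (-2 : ℤ) = z⁻¹ := by
  rw [zpow_neg_two_eq, pow_two, mul_inv, ← mul_assoc, mul_inv_cancel₀ hz, one_mul]

lemma gg_split (t : ℝ) (z c : ℂ) (hz : z ≠ 0) :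
    Complex.exp (-Complex.I * t * z) * z ^ (-2 : ℤ) * c
      = z ^ (-2 : ℤ) * c + (-Complex.I * t) * (z⁻¹ * c) + gg t z * c := by
  simp only [gg]
  linear_combination (-(Complex.I * t * c)) * zmul_key hz

lemma gg_comp_continuous {X : Type*} [TopologicalSpace X] (t : ℝ) {w : X → ℂ}
    (hw : Continuous w) (hne : ∀ x, w x ≠ 0) : Continuous (fun x => gg t (w x)) := by
  unfold gg
  exact (((Complex.continuous_exp.comp (by fun_prop)).sub continuous_const).add
    (by fun_prop)).mul (hw.zpow₀ (-2) (fun x => Or.inl (hne x)))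

lemma gg_continuousAt (t : ℝ) {z : ℂ} (hz : z ≠ 0) : ContinuousAt (gg t) z := by
  unfold gg
  exact ContinuousAt.mul (by fun_prop) (continuousAt_zpow₀ z (-2) (Or.inl hz))

lemma gg_bound (t γ : ℝ) {z : ℂ} (hz : z ≠ 0) (him : |z.im| ≤ γ) :
    ‖gg t z‖ ≤ t ^ 2 * (2 + Real.exp (|t| * γ)) := by
  have hzpos : 0 < ‖z‖ := norm_pos_iff.mpr hz
  have hnum : Complex.exp (-Complex.I * t * z) - 1 + Complex.I * t * z
      = Complex.exp (-Complex.I * t * z) - 1 - (-Complex.I * t * z) := by ring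
  have habsw : ‖-Complex.I * t * z‖ = |t| * ‖z‖ := by
    simp [map_mul, Complex.norm_real]
  have hz2 : ‖(z : ℂ) ^ (-2 : ℤ)‖ = (‖z‖)⁻¹ ^ 2 := by
    rw [zpow_neg_two_eq, norm_inv, norm_pow, inv_pow]
  have hnorm : ‖gg t z‖
      = ‖Complex.exp (-Complex.I * t * z) - 1 - (-Complex.I * t * z)‖
        * (‖z‖)⁻¹ ^ 2 := by
    unfold gg
    rw [norm_mul, hz2, hnum]
  have hre : (-Complex.I * t * z).re ≤ |t| * γ := by
    have h : (-Complex.I * t * z).re = t * z.im := by simp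
    rw [h]
    calc t * z.im ≤ |t * z.im| := le_abs_self _
      _ = |t| * |z.im| := abs_mul _ _
      _ ≤ |t| * γ := mul_le_mul_of_nonneg_left him (abs_nonneg t)
  have hexp1 : 0 ≤ Real.exp (|t| * γ) := (Real.exp_pos _).le
  rcases le_or_gt (|t| * ‖z‖) 1 with h1 | h1
  · have hb := Complex.norm_exp_sub_one_sub_id_le (x := -Complex.I * t * z) (by rw [habsw]; exact h1)
    rw [hnorm]
    calc ‖Complex.exp (-Complex.I * t * z) - 1 - (-Complex.I * t * z)‖
          * (‖z‖)⁻¹ ^ 2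
        ≤ (‖-Complex.I * t * z‖) ^ 2 * (‖z‖)⁻¹ ^ 2 :=
          mul_le_mul_of_nonneg_right hb (by positivity)
      _ = t ^ 2 := by
          rw [habsw]
          have h2 : (|t| * ‖z‖) ^ 2 = t ^ 2 * (‖z‖) ^ 2 := by
            rw [mul_pow, sq_abs]
          rw [h2]
          field_simp
      _ ≤ t ^ 2 * (2 + Real.exp (|t| * γ)) := by nlinarith [sq_nonneg t]
  · have hinv : (‖z‖)⁻¹ < |t| := by
      rw [inv_lt_iff_one_lt_mul₀ hzpos]
      linarith
    have hinvnn : 0 ≤ (‖z‖)⁻¹ := by positivity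
    have t1 : ‖Complex.exp (-Complex.I * t * z) - 1 - (-Complex.I * t * z)‖
        ≤ ‖Complex.exp (-Complex.I * t * z) - 1‖ + ‖-Complex.I * t * z‖ := by
      simpa using
        norm_sub_le (Complex.exp (-Complex.I * t * z) - 1) (-Complex.I * t * z)
    have t2 : ‖Complex.exp (-Complex.I * t * z) - 1‖
        ≤ ‖Complex.exp (-Complex.I * t * z)‖ + 1 := by
      simpa using norm_sub_le (Complex.exp (-Complex.I * t * z)) 1
    have t3 : ‖Complex.exp (-Complex.I * t * z)‖ ≤ Real.exp (|t| * γ) := by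
      rw [Complex.norm_exp]
      exact Real.exp_le_exp.2 hre
    have hnum_le : ‖Complex.exp (-Complex.I * t * z) - 1 - (-Complex.I * t * z)‖
        ≤ Real.exp (|t| * γ) + 1 + |t| * ‖z‖ := by
      rw [← habsw]; linarith
    rw [hnorm]
    have hinv2 : (‖z‖)⁻¹ ^ 2 ≤ t ^ 2 := by nlinarith [sq_abs t]
    have step1 : (Real.exp (|t| * γ) + 1) * (‖z‖)⁻¹ ^ 2
        ≤ (Real.exp (|t| * γ) + 1) * t ^ 2 :=
      mul_le_mul_of_nonneg_left hinv2 (by positivity)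
    have step2 : |t| * (‖z‖)⁻¹ ≤ |t| * |t| :=
      mul_le_mul_of_nonneg_left hinv.le (abs_nonneg t)
    calc ‖Complex.exp (-Complex.I * t * z) - 1 - (-Complex.I * t * z)‖
          * (‖z‖)⁻¹ ^ 2
        ≤ (Real.exp (|t| * γ) + 1 + |t| * ‖z‖) * (‖z‖)⁻¹ ^ 2 :=
          mul_le_mul_of_nonneg_right hnum_le (by positivity)
      _ = (Real.exp (|t| * γ) + 1) * (‖z‖)⁻¹ ^ 2
            + |t| * (‖z‖ * (‖z‖)⁻¹) * (‖z‖)⁻¹ := by ring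
      _ = (Real.exp (|t| * γ) + 1) * (‖z‖)⁻¹ ^ 2 + |t| * (‖z‖)⁻¹ := by
          rw [mul_inv_cancel₀ hzpos.ne']; ring
      _ ≤ t ^ 2 * (2 + Real.exp (|t| * γ)) := by nlinarith [sq_abs t]

lemma zpow_neg_two_eq' {z : ℂ} : z ^ (-2 : ℤ) = (z ^ 2)⁻¹ := by
  rw [zpow_neg]; norm_cast

lemma seg_ne_zero {a : ℝ} (ha : a ≠ 0) (y : ℝ) : (a : ℂ) + y * Complex.I ≠ 0 := by
  intro h
  rw [Complex.ext_iff] at h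
  simp at h
  exact ha h.1

lemma hasDerivAt_seg (a y : ℝ) :
    HasDerivAt (fun y : ℝ => (a : ℂ) + y * Complex.I) Complex.I y := by
  simpa using ((Complex.ofRealCLM.hasDerivAt (x := y)).mul_const Complex.I).const_add (a : ℂ)

lemma seg_int_zpow2 (a c d : ℝ) (ha : a ≠ 0) :
    (∫ y in c..d, ((a : ℂ) + y * Complex.I) ^ (-2 : ℤ) * Complex.I)
      = -((a : ℂ) + d * Complex.I)⁻¹ + ((a : ℂ) + c * Complex.I)⁻¹ := by
  have key : ∀ y ∈ Set.uIcc c d,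
      HasDerivAt (fun y : ℝ => -((a : ℂ) + y * Complex.I)⁻¹)
        (((a : ℂ) + y * Complex.I) ^ (-2 : ℤ) * Complex.I) y := by
    intro y _
    have h := (HasDerivAt.comp y (hasDerivAt_inv (seg_ne_zero ha y)) (hasDerivAt_seg a y)).neg
    simp only [Function.comp_def] at h
    refine h.congr_deriv (Eq.symm ?_)
    rw [zpow_neg_two_eq']
    ring
  have hcont : Continuous (fun y : ℝ => ((a : ℂ) + y * Complex.I) ^ (-2 : ℤ) * Complex.I) := by
    apply Continuous.mul _ continuous_const
    exact (by fun_prop : Continuous (fun y : ℝ => (a : ℂ) + y * Complex.I)).zpow₀ (-2)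
      (fun y => Or.inl (seg_ne_zero ha y))
  rw [intervalIntegral.integral_eq_sub_of_hasDerivAt key (hcont.intervalIntegrable c d)]
  ring

lemma seg_int_inv (a c d : ℝ) (ha : a ≠ 0) :
    (∫ y in c..d, ((a : ℂ) + y * Complex.I)⁻¹ * Complex.I)
      = ((1 / 2 * Real.log (a ^ 2 + d ^ 2) - 1 / 2 * Real.log (a ^ 2 + c ^ 2) : ℝ) : ℂ)
        + Complex.I * ((Real.arctan (d / a) - Real.arctan (c / a) : ℝ) : ℂ) := by
  have key : ∀ y ∈ Set.uIcc c d,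
      HasDerivAt (fun y : ℝ =>
          ((1 / 2 * Real.log (a ^ 2 + y ^ 2) : ℝ) : ℂ)
            + Complex.I * ((Real.arctan (y / a) : ℝ) : ℂ))
        (((a : ℂ) + y * Complex.I)⁻¹ * Complex.I) y := by
    intro y _
    have hpos : (0 : ℝ) < a ^ 2 + y ^ 2 := by positivity
    have hu : HasDerivAt (fun y : ℝ => 1 / 2 * Real.log (a ^ 2 + y ^ 2))
        (y / (a ^ 2 + y ^ 2)) y := by
      have h1 : HasDerivAt (fun y : ℝ => a ^ 2 + y ^ 2) (2 * y) y := by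
        simpa using (hasDerivAt_pow 2 y).const_add (a ^ 2)
      have h2 := (Real.hasDerivAt_log hpos.ne').comp y h1
      rw [Function.comp_def] at h2
      refine (h2.const_mul (1 / 2)).congr_deriv (Eq.symm ?_)
      field_simp
    have hv : HasDerivAt (fun y : ℝ => Real.arctan (y / a)) (a / (a ^ 2 + y ^ 2)) y := by
      have h1 : HasDerivAt (fun y : ℝ => y / a) (1 / a) y := by
        simpa [div_eq_mul_inv] using (hasDerivAt_id y).mul_const a⁻¹
      have h2 := (Real.hasDerivAt_arctan (y / a)).comp y h1
      refine h2.congr_deriv (Eq.symm ?_)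
      have hya : 1 + (y / a) ^ 2 = (a ^ 2 + y ^ 2) / a ^ 2 := by
        field_simp
      rw [hya, one_div_div]
      field_simp
    have hsum := (hu.ofReal_comp).add ((hv.ofReal_comp).const_mul Complex.I)
    refine hsum.congr_deriv (Eq.symm ?_)
    have hne := seg_ne_zero ha y
    have hpc : ((a : ℂ) ^ 2 + (y : ℂ) ^ 2) ≠ 0 := by
      intro h
      have h2 : ((a ^ 2 + y ^ 2 : ℝ) : ℂ) = 0 := by push_cast; linear_combination h
      exact hpos.ne' (by exact_mod_cast h2)
    push_cast
    have hcollect : (y : ℂ) / ((a : ℂ) ^ 2 + (y : ℂ) ^ 2)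
        + Complex.I * ((a : ℂ) / ((a : ℂ) ^ 2 + (y : ℂ) ^ 2))
        = ((y : ℂ) + Complex.I * a) / ((a : ℂ) ^ 2 + (y : ℂ) ^ 2) := by ring
    rw [hcollect, inv_mul_eq_div, div_eq_div_iff hne hpc]
    linear_combination (-((a : ℂ) * y)) * Complex.I_sq
  have hcont : Continuous (fun y : ℝ => ((a : ℂ) + y * Complex.I)⁻¹ * Complex.I) := by
    apply Continuous.mul _ continuous_const
    exact (by fun_prop : Continuous (fun y : ℝ => (a : ℂ) + y * Complex.I)).inv₀
      (seg_ne_zero ha)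
  rw [intervalIntegral.integral_eq_sub_of_hasDerivAt key (hcont.intervalIntegrable c d)]
  push_cast
  ring

lemma arc_ne_zero {η : ℝ} (hη : η ≠ 0) (θ : ℝ) : (η : ℂ) * Complex.exp (θ * Complex.I) ≠ 0 :=
  mul_ne_zero (by exact_mod_cast hη) (Complex.exp_ne_zero _)

lemma hasDerivAt_arc (η θ : ℝ) :
    HasDerivAt (fun θ : ℝ => (η : ℂ) * Complex.exp (θ * Complex.I))
      (Complex.I * η * Complex.exp (θ * Complex.I)) θ := by
  have h1 : HasDerivAt (fun θ : ℝ => (θ : ℂ) * Complex.I) Complex.I θ := by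
    simpa using (Complex.ofRealCLM.hasDerivAt (x := θ)).mul_const Complex.I
  have h2 := h1.cexp
  have h3 := h2.const_mul (η : ℂ)
  refine h3.congr_deriv (Eq.symm ?_)
  ring

lemma arc_cont_mul (η : ℝ) {g : ℂ → ℂ} (hg : Continuous g) :
    Continuous (fun θ : ℝ => g ((η : ℂ) * Complex.exp (θ * Complex.I))
      * (Complex.I * η * Complex.exp (θ * Complex.I))) := by fun_prop

lemma arc_int_zpow2 {η : ℝ} (hη : η ≠ 0) :
    (∫ θ in Real.pi..(0 : ℝ), ((η : ℂ) * Complex.exp (θ * Complex.I)) ^ (-2 : ℤ)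
        * (Complex.I * η * Complex.exp (θ * Complex.I)))
      = -2 / (η : ℂ) := by
  have key : ∀ θ ∈ Set.uIcc Real.pi (0 : ℝ),
      HasDerivAt (fun θ : ℝ => -((η : ℂ) * Complex.exp (θ * Complex.I))⁻¹)
        (((η : ℂ) * Complex.exp (θ * Complex.I)) ^ (-2 : ℤ)
          * (Complex.I * η * Complex.exp (θ * Complex.I))) θ := by
    intro θ _
    have h := (HasDerivAt.comp θ (hasDerivAt_inv (arc_ne_zero hη θ)) (hasDerivAt_arc η θ)).neg
    simp only [Function.comp_def] at h
    refine h.congr_deriv (Eq.symm ?_)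
    rw [zpow_neg_two_eq']
    ring
  have hcont : Continuous (fun θ : ℝ => ((η : ℂ) * Complex.exp (θ * Complex.I)) ^ (-2 : ℤ)
      * (Complex.I * η * Complex.exp (θ * Complex.I))) := by
    apply Continuous.mul _ (by fun_prop)
    exact (by fun_prop : Continuous (fun θ : ℝ => (η : ℂ) * Complex.exp (θ * Complex.I))).zpow₀
      (-2) (fun θ => Or.inl (arc_ne_zero hη θ))
  rw [intervalIntegral.integral_eq_sub_of_hasDerivAt key
    (hcont.intervalIntegrable Real.pi 0)]
  have hexp0 : Complex.exp ((0 : ℝ) * Complex.I) = 1 := by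
    norm_num
  have hexppi : Complex.exp ((Real.pi : ℝ) * Complex.I) = -1 := Complex.exp_pi_mul_I
  rw [hexp0, hexppi]
  have hηc : (η : ℂ) ≠ 0 := by exact_mod_cast hη
  field_simp
  ring

lemma arc_int_inv {η : ℝ} (hη : η ≠ 0) :
    (∫ θ in Real.pi..(0 : ℝ), ((η : ℂ) * Complex.exp (θ * Complex.I))⁻¹
        * (Complex.I * η * Complex.exp (θ * Complex.I)))
      = -(Real.pi : ℂ) * Complex.I := by
  have hcong : ∀ θ ∈ Set.uIcc Real.pi (0 : ℝ),
      ((η : ℂ) * Complex.exp (θ * Complex.I))⁻¹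
        * (Complex.I * η * Complex.exp (θ * Complex.I)) = Complex.I := by
    intro θ _
    have hne := arc_ne_zero hη θ
    have hηc : (η : ℂ) ≠ 0 := by exact_mod_cast hη
    field_simp
  rw [intervalIntegral.integral_congr hcong, intervalIntegral.integral_const]
  rw [Complex.real_smul]
  push_cast
  ring

/-- The contour integral of `e^{−itλ} λ^{−2}` over `Γ_η`, the contour consisting
of the vertical segment from `−η − iγ` to `−η`, the upper semicircular arc
`{η e^{iθ} : θ ∈ [0, π]}` traversed from `−η` through `iη` to `η`, and the
vertical segment from `η` to `η − iγ`. -/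
noncomputable def gammaEtaIntegralNoLog (γ t η : ℝ) : ℂ :=
  (∫ y in (-γ)..(0 : ℝ),
      Complex.exp (-Complex.I * t * (-η + y * Complex.I)) *
        (-η + y * Complex.I) ^ (-2 : ℤ) * Complex.I) +
  (∫ θ in Real.pi..(0 : ℝ),
      Complex.exp (-Complex.I * t * (η * Complex.exp (θ * Complex.I))) *
        (η * Complex.exp (θ * Complex.I)) ^ (-2 : ℤ) *
        (Complex.I * η * Complex.exp (θ * Complex.I))) +
  (∫ y in (0 : ℝ)..(-γ),
      Complex.exp (-Complex.I * t * (η + y * Complex.I)) *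
        (η + y * Complex.I) ^ (-2 : ℤ) * Complex.I)


lemma main_eq (γ t : ℝ) {η : ℝ} (hη : 0 < η) :
    gammaEtaIntegralNoLog γ t η =
      ((-(η : ℂ) - γ * Complex.I)⁻¹ - ((η : ℂ) - γ * Complex.I)⁻¹)
      + (-Complex.I * t) * (-(Real.pi : ℂ) * Complex.I
          - 2 * Complex.I * ((Real.arctan (γ / η) : ℝ) : ℂ))
      + (∫ θ in Real.pi..(0 : ℝ), gg t ((η : ℂ) * Complex.exp (θ * Complex.I))
          * (Complex.I * η * Complex.exp (θ * Complex.I)))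
      + (∫ y in (-γ)..(0 : ℝ),
          (gg t (-(η : ℂ) + y * Complex.I) - gg t ((η : ℂ) + y * Complex.I)) * Complex.I) := by
  have hηne : η ≠ 0 := hη.ne'
  have hmne : (-η : ℝ) ≠ 0 := by simpa using hηne
  have hneL : ∀ y : ℝ, -(η : ℂ) + y * Complex.I ≠ 0 := by
    intro y
    have := seg_ne_zero hmne y
    push_cast at this
    exact this
  have hneR : ∀ y : ℝ, (η : ℂ) + y * Complex.I ≠ 0 := seg_ne_zero hηne
  have hcontL : Continuous fun y : ℝ => -(η : ℂ) + y * Complex.I := by fun_prop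
  have hcontR : Continuous fun y : ℝ => (η : ℂ) + y * Complex.I := by fun_prop
  have hcontA : Continuous fun θ : ℝ => (η : ℂ) * Complex.exp (θ * Complex.I) := by fun_prop
  have hneA := arc_ne_zero hηne
  -- Piece 1 : left segment
  have P1 : (∫ y in (-γ)..(0 : ℝ),
      Complex.exp (-Complex.I * t * (-(η : ℂ) + y * Complex.I)) *
        (-(η : ℂ) + y * Complex.I) ^ (-2 : ℤ) * Complex.I)
      = (∫ y in (-γ)..(0 : ℝ), (-(η : ℂ) + y * Complex.I) ^ (-2 : ℤ) * Complex.I)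
        + (-Complex.I * t) * (∫ y in (-γ)..(0 : ℝ), (-(η : ℂ) + y * Complex.I)⁻¹ * Complex.I)
        + (∫ y in (-γ)..(0 : ℝ), gg t (-(η : ℂ) + y * Complex.I) * Complex.I) := by
    rw [← intervalIntegral.integral_const_mul]
    rw [← intervalIntegral.integral_add
      ((((hcontL.zpow₀ (-2) (fun y => Or.inl (hneL y))).fun_mul
          continuous_const)).intervalIntegrable _ _)
      (((continuous_const.fun_mul ((hcontL.fun_inv₀ hneL).fun_mul
          continuous_const))).intervalIntegrable _ _)]
    rw [← intervalIntegral.integral_add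
      ((((hcontL.zpow₀ (-2) (fun y => Or.inl (hneL y))).fun_mul continuous_const).fun_add
        (continuous_const.fun_mul ((hcontL.fun_inv₀ hneL).fun_mul continuous_const))).intervalIntegrable _ _)
      (((gg_comp_continuous t hcontL hneL).fun_mul continuous_const).intervalIntegrable _ _)]
    apply intervalIntegral.integral_congr
    intro y _
    exact gg_split t _ Complex.I (hneL y)
  -- Piece 2 : arc
  have P2 : (∫ θ in Real.pi..(0 : ℝ),
      Complex.exp (-Complex.I * t * ((η : ℂ) * Complex.exp (θ * Complex.I))) *
        ((η : ℂ) * Complex.exp (θ * Complex.I)) ^ (-2 : ℤ) *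
        (Complex.I * η * Complex.exp (θ * Complex.I)))
      = (∫ θ in Real.pi..(0 : ℝ), ((η : ℂ) * Complex.exp (θ * Complex.I)) ^ (-2 : ℤ)
          * (Complex.I * η * Complex.exp (θ * Complex.I)))
        + (-Complex.I * t) * (∫ θ in Real.pi..(0 : ℝ),
            ((η : ℂ) * Complex.exp (θ * Complex.I))⁻¹
              * (Complex.I * η * Complex.exp (θ * Complex.I)))
        + (∫ θ in Real.pi..(0 : ℝ), gg t ((η : ℂ) * Complex.exp (θ * Complex.I))
            * (Complex.I * η * Complex.exp (θ * Complex.I))) := by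
    rw [← intervalIntegral.integral_const_mul]
    rw [← intervalIntegral.integral_add
      (((hcontA.zpow₀ (-2) (fun θ => Or.inl (hneA θ))).fun_mul (by fun_prop)).intervalIntegrable _ _)
      ((continuous_const.fun_mul ((hcontA.fun_inv₀ hneA).fun_mul (by fun_prop))).intervalIntegrable _ _)]
    rw [← intervalIntegral.integral_add
      ((((hcontA.zpow₀ (-2) (fun θ => Or.inl (hneA θ))).fun_mul (by fun_prop)).fun_add
        (continuous_const.fun_mul ((hcontA.fun_inv₀ hneA).fun_mul (by fun_prop)))).intervalIntegrable _ _)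
      (((gg_comp_continuous t hcontA hneA).fun_mul (by fun_prop)).intervalIntegrable _ _)]
    apply intervalIntegral.integral_congr
    intro θ _
    exact gg_split t _ _ (hneA θ)
  -- Piece 3 : right segment
  have P3 : (∫ y in (0 : ℝ)..(-γ),
      Complex.exp (-Complex.I * t * ((η : ℂ) + y * Complex.I)) *
        ((η : ℂ) + y * Complex.I) ^ (-2 : ℤ) * Complex.I)
      = (∫ y in (0 : ℝ)..(-γ), ((η : ℂ) + y * Complex.I) ^ (-2 : ℤ) * Complex.I)
        + (-Complex.I * t) * (∫ y in (0 : ℝ)..(-γ), ((η : ℂ) + y * Complex.I)⁻¹ * Complex.I)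
        + (∫ y in (0 : ℝ)..(-γ), gg t ((η : ℂ) + y * Complex.I) * Complex.I) := by
    rw [← intervalIntegral.integral_const_mul]
    rw [← intervalIntegral.integral_add
      ((((hcontR.zpow₀ (-2) (fun y => Or.inl (hneR y))).fun_mul
          continuous_const)).intervalIntegrable _ _)
      (((continuous_const.fun_mul ((hcontR.fun_inv₀ hneR).fun_mul
          continuous_const))).intervalIntegrable _ _)]
    rw [← intervalIntegral.integral_add
      ((((hcontR.zpow₀ (-2) (fun y => Or.inl (hneR y))).fun_mul continuous_const).fun_add
        (continuous_const.fun_mul ((hcontR.fun_inv₀ hneR).fun_mul continuous_const))).intervalIntegrable _ _)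
      (((gg_comp_continuous t hcontR hneR).fun_mul continuous_const).intervalIntegrable _ _)]
    apply intervalIntegral.integral_congr
    intro y _
    exact gg_split t _ Complex.I (hneR y)
  -- evaluated values
  have V1 : (∫ y in (-γ)..(0 : ℝ), (-(η : ℂ) + y * Complex.I) ^ (-2 : ℤ) * Complex.I)
      = -(-(η : ℂ))⁻¹ + (-(η : ℂ) + -γ * Complex.I)⁻¹ := by
    have h := seg_int_zpow2 (-η) (-γ) 0 hmne
    push_cast at h
    simpa using h
  have V2 : (∫ y in (-γ)..(0 : ℝ), (-(η : ℂ) + y * Complex.I)⁻¹ * Complex.I)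
      = ((1 / 2 * Real.log (η ^ 2) - 1 / 2 * Real.log (η ^ 2 + γ ^ 2) : ℝ) : ℂ)
        + Complex.I * ((-Real.arctan (γ / η) : ℝ) : ℂ) := by
    have h := seg_int_inv (-η) (-γ) 0 hmne
    simp only [neg_sq, zero_div, Real.arctan_zero, neg_div_neg_eq, zero_pow, add_zero,
      zero_sub] at h
    push_cast at h
    norm_num at h ⊢
    convert h using 2 <;> push_cast <;> ring
  have V3 : (∫ y in (0 : ℝ)..(-γ), ((η : ℂ) + y * Complex.I) ^ (-2 : ℤ) * Complex.I)
      = -((η : ℂ) + -γ * Complex.I)⁻¹ + ((η : ℂ))⁻¹ := by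
    have h := seg_int_zpow2 η 0 (-γ) hηne
    push_cast at h
    simpa using h
  have V4 : (∫ y in (0 : ℝ)..(-γ), ((η : ℂ) + y * Complex.I)⁻¹ * Complex.I)
      = ((1 / 2 * Real.log (η ^ 2 + γ ^ 2) - 1 / 2 * Real.log (η ^ 2) : ℝ) : ℂ)
        + Complex.I * ((-Real.arctan (γ / η) : ℝ) : ℂ) := by
    have h := seg_int_inv η 0 (-γ) hηne
    simp only [neg_sq, zero_div, Real.arctan_zero, neg_div, Real.arctan_neg, zero_pow,
      add_zero, sub_zero] at h
    push_cast at h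
    norm_num at h ⊢
    convert h using 2 <;> push_cast <;> ring
  have V5 : (∫ y in (0 : ℝ)..(-γ), gg t ((η : ℂ) + y * Complex.I) * Complex.I)
      = -(∫ y in (-γ)..(0 : ℝ), gg t ((η : ℂ) + y * Complex.I) * Complex.I) := by
    rw [← intervalIntegral.integral_symm]
  have V6 : (∫ y in (-γ)..(0 : ℝ),
      (gg t (-(η : ℂ) + y * Complex.I) - gg t ((η : ℂ) + y * Complex.I)) * Complex.I)
      = (∫ y in (-γ)..(0 : ℝ), gg t (-(η : ℂ) + y * Complex.I) * Complex.I)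
        - (∫ y in (-γ)..(0 : ℝ), gg t ((η : ℂ) + y * Complex.I) * Complex.I) := by
    rw [← intervalIntegral.integral_sub
      (((gg_comp_continuous t hcontL hneL).fun_mul continuous_const).intervalIntegrable _ _)
      (((gg_comp_continuous t hcontR hneR).fun_mul continuous_const).intervalIntegrable _ _)]
    congr 1
    ext y
    ring
  -- assemble
  have hdef : gammaEtaIntegralNoLog γ t η =
      (∫ y in (-γ)..(0 : ℝ),
        Complex.exp (-Complex.I * t * (-(η : ℂ) + y * Complex.I)) *
          (-(η : ℂ) + y * Complex.I) ^ (-2 : ℤ) * Complex.I) +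
      (∫ θ in Real.pi..(0 : ℝ),
        Complex.exp (-Complex.I * t * ((η : ℂ) * Complex.exp (θ * Complex.I))) *
          ((η : ℂ) * Complex.exp (θ * Complex.I)) ^ (-2 : ℤ) *
          (Complex.I * η * Complex.exp (θ * Complex.I))) +
      (∫ y in (0 : ℝ)..(-γ),
        Complex.exp (-Complex.I * t * ((η : ℂ) + y * Complex.I)) *
          ((η : ℂ) + y * Complex.I) ^ (-2 : ℤ) * Complex.I) := rfl
  rw [hdef, P1, P2, P3, V1, V2, V3, V4, V5, V6, arc_int_zpow2 hηne, arc_int_inv hηne]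
  have hγc : ((γ : ℝ) : ℂ) * Complex.I = (γ : ℂ) * Complex.I := rfl
  push_cast
  ring

/-- For any `γ > 0` and `t ∈ ℝ`,
`lim_{η→0⁺} ∫_{Γ_η} e^{−itλ} λ^{−2} dλ = −2πt`. -/
theorem stmt1 (γ : ℝ) (hγ : 0 < γ) (t : ℝ) :
    Tendsto (fun η : ℝ => gammaEtaIntegralNoLog γ t η)
      (nhdsWithin 0 (Set.Ioi 0)) (nhds (-(2 * Real.pi * t) : ℂ)) := by
  set C : ℝ := t ^ 2 * (2 + Real.exp (|t| * γ)) with hC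
  have hC0 : 0 ≤ C := by positivity
  -- h1 : inverse terms
  have hne0 : (-(0 : ℂ) - γ * Complex.I) ≠ 0 := by
    simp [Complex.ext_iff, hγ.ne']
  have hne0' : ((0 : ℂ) - γ * Complex.I) ≠ 0 := by
    simp [Complex.ext_iff, hγ.ne']
  have h1 : Tendsto (fun η : ℝ => (-(η : ℂ) - γ * Complex.I)⁻¹ - ((η : ℂ) - γ * Complex.I)⁻¹)
      (nhdsWithin 0 (Set.Ioi 0)) (nhds 0) := by
    have hc : ContinuousAt
        (fun η : ℝ => (-(η : ℂ) - γ * Complex.I)⁻¹ - ((η : ℂ) - γ * Complex.I)⁻¹) 0 := by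
      apply ContinuousAt.sub
      · exact ContinuousAt.inv₀ (by fun_prop) (by simpa using hne0)
      · exact ContinuousAt.inv₀ (by fun_prop) (by simpa using hne0')
    have := hc.tendsto.mono_left (nhdsWithin_le_nhds (s := Set.Ioi (0:ℝ)))
    simpa using this
  -- h2 : arctan term
  have hdiv : Tendsto (fun η : ℝ => γ / η) (nhdsWithin 0 (Set.Ioi 0)) atTop := by
    simp only [div_eq_mul_inv]
    exact tendsto_inv_nhdsGT_zero.const_mul_atTop hγ
  have harctan : Tendsto (fun η : ℝ => Real.arctan (γ / η)) (nhdsWithin 0 (Set.Ioi 0))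
      (nhds (Real.pi / 2)) :=
    (Real.tendsto_arctan_atTop.mono_right nhdsWithin_le_nhds).comp hdiv
  have hA : Tendsto (fun η : ℝ => ((Real.arctan (γ / η) : ℝ) : ℂ))
      (nhdsWithin 0 (Set.Ioi 0)) (nhds ((Real.pi / 2 : ℝ) : ℂ)) :=
    (Complex.continuous_ofReal.tendsto _).comp harctan
  have h2 : Tendsto (fun η : ℝ => (-Complex.I * t) * (-(Real.pi : ℂ) * Complex.I
      - 2 * Complex.I * ((Real.arctan (γ / η) : ℝ) : ℂ)))
      (nhdsWithin 0 (Set.Ioi 0)) (nhds (-(2 * Real.pi * t) : ℂ)) := by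
    have h2' := ((tendsto_const_nhds (x := -(Real.pi : ℂ) * Complex.I)).sub
      (hA.const_mul (2 * Complex.I))).const_mul (-Complex.I * (t : ℂ))
    have hval : (-Complex.I * (t : ℂ)) * (-(Real.pi : ℂ) * Complex.I
        - 2 * Complex.I * ((Real.pi / 2 : ℝ) : ℂ)) = (-(2 * Real.pi * t) : ℂ) := by
      push_cast
      linear_combination (2 * (Real.pi : ℂ) * t) * Complex.I_sq
    rw [hval] at h2'
    exact h2'
  -- h3 : arc gg term
  have h3 : Tendsto (fun η : ℝ => ∫ θ in Real.pi..(0 : ℝ),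
      gg t ((η : ℂ) * Complex.exp (θ * Complex.I))
        * (Complex.I * η * Complex.exp (θ * Complex.I)))
      (nhdsWithin 0 (Set.Ioi 0)) (nhds 0) := by
    rw [tendsto_zero_iff_norm_tendsto_zero]
    apply squeeze_zero' (Eventually.of_forall (fun _ => norm_nonneg _))
      (g := fun η => (C * η) * Real.pi)
    · filter_upwards [Ioo_mem_nhdsGT_of_mem (Set.left_mem_Ico.mpr hγ)] with η hmem
      have hη : 0 < η := hmem.1
      have hbound : ∀ θ ∈ Set.uIoc Real.pi (0 : ℝ),
          ‖gg t ((η : ℂ) * Complex.exp (θ * Complex.I))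
            * (Complex.I * η * Complex.exp (θ * Complex.I))‖ ≤ C * η := by
        intro θ _
        have hne : ((η : ℂ) * Complex.exp (θ * Complex.I)) ≠ 0 :=
          mul_ne_zero (by exact_mod_cast hη.ne') (Complex.exp_ne_zero _)
        have habs : ‖(η : ℂ) * Complex.exp (θ * Complex.I)‖ = η := by
          rw [norm_mul, Complex.norm_exp]
          simp [Complex.norm_real, abs_of_pos hη]
        have him : |((η : ℂ) * Complex.exp (θ * Complex.I)).im| ≤ γ := by
          calc |((η : ℂ) * Complex.exp (θ * Complex.I)).im|
              ≤ ‖(η : ℂ) * Complex.exp (θ * Complex.I)‖ := Complex.abs_im_le_norm _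
            _ = η := habs
            _ ≤ γ := hmem.2.le
        have hgg := gg_bound t γ hne him
        have hrest : ‖Complex.I * (η : ℂ) * Complex.exp (θ * Complex.I)‖ = η := by
          rw [norm_mul, norm_mul, Complex.norm_I, one_mul,
            Complex.norm_exp, Complex.norm_real]
          simp [abs_of_pos hη]
        rw [norm_mul, hrest]
        exact mul_le_mul_of_nonneg_right hgg hη.le
      have := intervalIntegral.norm_integral_le_of_norm_le_const hbound
      calc ‖∫ θ in Real.pi..(0 : ℝ), gg t ((η : ℂ) * Complex.exp (θ * Complex.I))
            * (Complex.I * η * Complex.exp (θ * Complex.I))‖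
          ≤ C * η * |0 - Real.pi| := this
        _ = C * η * Real.pi := by
            rw [zero_sub, abs_neg, abs_of_nonneg Real.pi_pos.le]
    · have : Tendsto (fun η : ℝ => C * η * Real.pi) (nhds 0) (nhds (C * 0 * Real.pi)) :=
        ((continuous_const.mul continuous_id).mul continuous_const).tendsto 0
      simpa using this.mono_left nhdsWithin_le_nhds
  -- h4 : segment gg term
  have hae : ∀ᵐ y : ℝ ∂MeasureTheory.volume, y ≠ 0 := by
    refine MeasureTheory.ae_iff.mpr ?_
    simp only [ne_eq, not_not, Set.setOf_eq_eq_singleton]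
    exact Real.volume_singleton
  have h4 : Tendsto (fun η : ℝ => ∫ y in (-γ)..(0 : ℝ),
      (gg t (-(η : ℂ) + y * Complex.I) - gg t ((η : ℂ) + y * Complex.I)) * Complex.I)
      (nhdsWithin 0 (Set.Ioi 0)) (nhds 0) := by
    have key := intervalIntegral.tendsto_integral_filter_of_dominated_convergence
      (μ := MeasureTheory.volume) (a := -γ) (b := (0 : ℝ))
      (l := nhdsWithin (0 : ℝ) (Set.Ioi 0))
      (F := fun η y => (gg t (-(η : ℂ) + y * Complex.I) - gg t ((η : ℂ) + y * Complex.I))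
        * Complex.I)
      (f := fun _ => (0 : ℂ)) (bound := fun _ => 2 * C) ?_ ?_ ?_ ?_
    · simpa using key
    · filter_upwards [self_mem_nhdsWithin] with η hη
      have hη' : (0 : ℝ) < η := hη
      have hneL : ∀ y : ℝ, -(η : ℂ) + y * Complex.I ≠ 0 := by
        intro y h
        rw [Complex.ext_iff] at h
        simp at h
        exact hη'.ne' h.1
      have hneR : ∀ y : ℝ, (η : ℂ) + y * Complex.I ≠ 0 := by
        intro y h
        rw [Complex.ext_iff] at h
        simp at h
        exact hη'.ne' h.1
      exact (((gg_comp_continuous t (by fun_prop) hneL).sub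
        (gg_comp_continuous t (by fun_prop) hneR)).mul
        continuous_const).aestronglyMeasurable
    · filter_upwards [self_mem_nhdsWithin] with η hη
      have hη' : (0 : ℝ) < η := hη
      refine Eventually.of_forall (fun y => ?_)
      intro hy
      rw [Set.uIoc_of_le (by linarith : -γ ≤ (0 : ℝ))] at hy
      have hyabs : |y| ≤ γ := by
        rw [abs_le]
        exact ⟨hy.1.le, by linarith [hy.2]⟩
      have hneL : -(η : ℂ) + y * Complex.I ≠ 0 := by
        intro h
        rw [Complex.ext_iff] at h
        simp at h
        exact hη'.ne' h.1
      have hneR : (η : ℂ) + y * Complex.I ≠ 0 := by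
        intro h
        rw [Complex.ext_iff] at h
        simp at h
        exact hη'.ne' h.1
      have himL : |(-(η : ℂ) + y * Complex.I).im| ≤ γ := by simpa using hyabs
      have himR : |((η : ℂ) + y * Complex.I).im| ≤ γ := by simpa using hyabs
      have b1 := gg_bound t γ hneL himL
      have b2 := gg_bound t γ hneR himR
      calc ‖(gg t (-(η : ℂ) + y * Complex.I) - gg t ((η : ℂ) + y * Complex.I)) * Complex.I‖
          = ‖gg t (-(η : ℂ) + y * Complex.I) - gg t ((η : ℂ) + y * Complex.I)‖ := by
            rw [norm_mul, Complex.norm_I, mul_one]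
        _ ≤ ‖gg t (-(η : ℂ) + y * Complex.I)‖ + ‖gg t ((η : ℂ) + y * Complex.I)‖ :=
            norm_sub_le _ _
        _ ≤ 2 * C := by rw [hC]; linarith
    · exact intervalIntegrable_const
    · filter_upwards [hae] with y hy0
      intro _
      have hyI : ((y : ℂ) * Complex.I) ≠ 0 := by
        simp [Complex.ext_iff, hy0]
      have hc1 : ContinuousAt (fun η : ℝ => gg t (-(η : ℂ) + y * Complex.I)) 0 := by
        apply ContinuousAt.comp (x := (0 : ℝ)) (g := gg t)
        · apply gg_continuousAt
          simpa using hyI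
        · fun_prop
      have hc2 : ContinuousAt (fun η : ℝ => gg t ((η : ℂ) + y * Complex.I)) 0 := by
        apply ContinuousAt.comp (x := (0 : ℝ)) (g := gg t)
        · apply gg_continuousAt
          simpa using hyI
        · fun_prop
      have hcomb : Tendsto (fun η : ℝ =>
          (gg t (-(η : ℂ) + y * Complex.I) - gg t ((η : ℂ) + y * Complex.I)) * Complex.I)
          (nhdsWithin (0 : ℝ) (Set.Ioi 0))
          (nhds ((gg t (-((0 : ℝ) : ℂ) + y * Complex.I)
            - gg t (((0 : ℝ) : ℂ) + y * Complex.I)) * Complex.I)) :=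
        (((hc1.sub hc2).mul (continuousAt_const (y := Complex.I))).tendsto).mono_left
          nhdsWithin_le_nhds
      simpa using hcomb
  -- assemble
  have hE := ((h1.add h2).add h3).add h4
  simp only [add_zero, zero_add] at hE
  apply hE.congr'
  filter_upwards [self_mem_nhdsWithin] with η hη
  exact (main_eq γ t hη).symm
end

section
/- Let a₀ > 0 and let χ : ℝ² → ℝ be smooth with compact support, 0 ≤ χ ≤ 1, χ ≡ 1 on a neighborhood of the origin, and suppose in addition that (∂_{x₁}χ)(0, x₂) = 0 for all x₂ ∈ ℝ. Define u_p(x) = (1 − χ(x)) x₁/|x|² + χ(x) a₀ x₁ for x ≠ 0 (smoothly extended by a₀x₁ near 0). Then (Δu_p)(0, x₂) = 0 for all x₂ ≠ 0; that is, Δu_p vanishes on the entire zero set of u_p. -/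
/-- First partial derivative of a function on `ℝ²`. -/
noncomputable def pd1 (f : ℝ × ℝ → ℝ) (x : ℝ × ℝ) : ℝ :=
  deriv (fun s => f (s, x.2)) x.1

/-- Second partial derivative of a function on `ℝ²`. -/
noncomputable def pd2 (f : ℝ × ℝ → ℝ) (x : ℝ × ℝ) : ℝ :=
  deriv (fun s => f (x.1, s)) x.2

/-- The Laplacian `Δf = ∂₁²f + ∂₂²f` on `ℝ²`. -/
noncomputable def lap (f : ℝ × ℝ → ℝ) (x : ℝ × ℝ) : ℝ :=
  pd1 (pd1 f) x + pd2 (pd2 f) x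

/-- For `a₀ > 0` and smooth compactly supported `χ` with `0 ≤ χ ≤ 1`, `χ ≡ 1`
near the origin, and `∂₁χ(0,x₂) = 0` for all `x₂`, the function
`u_p(x) = (1−χ(x)) x₁/|x|² + χ(x) a₀ x₁` satisfies `Δu_p(0,x₂) = 0` for all
`x₂ ≠ 0`: the Laplacian vanishes on the whole zero set of `u_p`. -/
theorem stmt6 (a₀ : ℝ) (ha₀ : 0 < a₀) (χ : ℝ × ℝ → ℝ) (hχ : ContDiff ℝ (⊤ : ℕ∞) χ)
    (hsupp : HasCompactSupport χ) (hrange : ∀ x, 0 ≤ χ x ∧ χ x ≤ 1)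
    (hone : ∀ᶠ x in nhds (0 : ℝ × ℝ), χ x = 1)
    (hflat : ∀ x₂ : ℝ, pd1 χ (0, x₂) = 0) :
    ∀ x₂ : ℝ, x₂ ≠ 0 →
      lap (fun y => (1 - χ y) * (y.1 / (y.1 ^ 2 + y.2 ^ 2)) + χ y * (a₀ * y.1)) (0, x₂) = 0 := by
  intro x₂ hx₂
  set u : ℝ × ℝ → ℝ := fun y => (1 - χ y) * (y.1 / (y.1 ^ 2 + y.2 ^ 2)) + χ y * (a₀ * y.1)
    with hu
  have hb : (0:ℝ) < x₂ ^ 2 := by positivity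
  set b := x₂ ^ 2 with hbdef
  set c : ℝ → ℝ := fun t => χ (t, x₂) with hcdef
  have hc : ContDiff ℝ (⊤ : ℕ∞) c := hχ.comp (contDiff_id.prodMk contDiff_const)
  have hcd : Differentiable ℝ c := hc.differentiable (by simp)
  have hc2 : ContDiff ℝ (⊤ : ℕ∞) (deriv c) := (contDiff_infty_iff_deriv.mp hc).2
  have hcd2 : Differentiable ℝ (deriv c) := hc2.differentiable (by simp)
  have hc'0 : deriv c 0 = 0 := hflat x₂
  have hden : ∀ t : ℝ, t ^ 2 + b ≠ 0 := fun t => by positivity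
  set g : ℝ → ℝ := fun t => (b - t ^ 2) / (t ^ 2 + b) ^ 2 with hgdef
  have hsq : ∀ t : ℝ, HasDerivAt (fun s : ℝ => s ^ 2 + b) (2 * t) t := by
    intro t
    simpa using (hasDerivAt_pow 2 t).add_const b
  have hf : ∀ t : ℝ, HasDerivAt (fun s => s / (s ^ 2 + b)) (g t) t := by
    intro t
    have h2 := (hasDerivAt_id t).div (hsq t) (hden t)
    refine h2.congr_deriv ?_
    simp only [hgdef, id_eq]
    ring
  set F : ℝ → ℝ := fun t => ((0 - deriv c t) * (t / (t ^ 2 + b)) + (1 - c t) * g t)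
      + (deriv c t * (a₀ * t) + c t * (a₀ * 1)) with hFdef
  have hh : ∀ t : ℝ,
      HasDerivAt (fun s => (1 - c s) * (s / (s ^ 2 + b)) + c s * (a₀ * s)) (F t) t := by
    intro t
    exact (((hasDerivAt_const t (1:ℝ)).sub (hcd t).hasDerivAt).mul (hf t)).add
      (((hcd t).hasDerivAt).mul ((hasDerivAt_id t).const_mul a₀))
  -- derivative of g at 0 is 0
  have hg0 : HasDerivAt g 0 0 := by
    have hn : HasDerivAt (fun t : ℝ => b - t ^ 2) 0 0 := by
      simpa [Pi.sub_def] using (hasDerivAt_const (0:ℝ) b).sub (hasDerivAt_pow 2 (0:ℝ))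
    have hd : HasDerivAt (fun t : ℝ => (t ^ 2 + b) ^ 2) 0 0 := by
      simpa [Pi.pow_def] using (hsq 0).pow 2
    have hd0 : ((0:ℝ) ^ 2 + b) ^ 2 ≠ 0 := pow_ne_zero 2 (hden 0)
    simpa [Pi.div_def] using hn.div hd hd0
  have hF0 : HasDerivAt F 0 0 := by
    have t1 := (((hasDerivAt_const (0:ℝ) (0:ℝ)).sub (hcd2 0).hasDerivAt).mul (hf 0)).add
      (((hasDerivAt_const (0:ℝ) (1:ℝ)).sub (hcd 0).hasDerivAt).mul hg0)
    have t2 := (((hcd2 0).hasDerivAt).mul ((hasDerivAt_id 0).const_mul a₀)).add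
      (((hcd 0).hasDerivAt).mul_const (a₀ * 1))
    have := t1.add t2
    refine this.congr_deriv ?_
    simp [hc'0]
  -- pd2 part
  have hz : ∀ s : ℝ, pd2 u (0, s) = 0 := by
    intro s
    have h0 : (fun t => u (0, t)) = fun _ => (0:ℝ) := by
      funext t
      simp [hu]
    simp [pd2, h0]
  have h2 : pd2 (pd2 u) (0, x₂) = 0 := by
    have h0 : (fun s => pd2 u (0, s)) = fun _ => (0:ℝ) := funext hz
    show deriv (fun s => pd2 u (0, s)) x₂ = 0
    rw [h0]; simp
  -- pd1 part
  have hpd1 : ∀ s : ℝ, pd1 u (s, x₂) = F s := fun s => (hh s).deriv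
  have h1 : pd1 (pd1 u) (0, x₂) = 0 := by
    show deriv (fun s => pd1 u (s, x₂)) 0 = 0
    rw [funext hpd1]
    exact hF0.deriv
  show pd1 (pd1 u) (0, x₂) + pd2 (pd2 u) (0, x₂) = 0
  rw [h1, h2, add_zero]
end

section
/- Let a₀ > 0, let χ : ℝ² → ℝ be smooth with compact support, 0 ≤ χ ≤ 1, χ ≡ 1 on a neighborhood of the origin, with (∂_{x₁}χ)(0, x₂) = 0 for all x₂ ∈ ℝ, and let c : ℝ² → ℝ be smooth with 0 < c_m ≤ c(x) ≤ c_M < ∞ for all x. Define u_p(x) = (1 − χ(x)) x₁/|x|² + χ(x) a₀ x₁ for x ≠ 0, smoothly extended by a₀x₁ near 0. Then there exists a smooth, compactly supported, real-valued function V on ℝ² such that −c(x)² Δu_p(x) + V(x) u_p(x) = 0 for all x ∈ ℝ². -/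
lemma hasDerivAt_slice1 {f : ℝ × ℝ → ℝ} {a b : ℝ} (hf : DifferentiableAt ℝ f (a, b)) :
    HasDerivAt (fun s => f (s, b)) (pd1 f (a, b)) a := by
  have h1 : HasDerivAt (fun s : ℝ => (s, b)) ((1 : ℝ), (0 : ℝ)) a :=
    (hasDerivAt_id a).prodMk (hasDerivAt_const a b)
  have h2 : HasDerivAt (fun s => f (s, b)) (fderiv ℝ f (a, b) (1, 0)) a :=
    hf.hasFDerivAt.comp_hasDerivAt a h1
  have h3 : pd1 f (a, b) = fderiv ℝ f (a, b) (1, 0) := h2.deriv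
  rw [h3]; exact h2

lemma hasDerivAt_slice2 {f : ℝ × ℝ → ℝ} {a b : ℝ} (hf : DifferentiableAt ℝ f (a, b)) :
    HasDerivAt (fun s => f (a, s)) (pd2 f (a, b)) b := by
  have h1 : HasDerivAt (fun s : ℝ => (a, s)) ((0 : ℝ), (1 : ℝ)) b :=
    (hasDerivAt_const b a).prodMk (hasDerivAt_id b)
  have h2 : HasDerivAt (fun s => f (a, s)) (fderiv ℝ f (a, b) (0, 1)) b :=
    hf.hasFDerivAt.comp_hasDerivAt b h1
  have h3 : pd2 f (a, b) = fderiv ℝ f (a, b) (0, 1) := h2.deriv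
  rw [h3]; exact h2

lemma pd1_eq_fderiv {f : ℝ × ℝ → ℝ} (hf : Differentiable ℝ f) :
    pd1 f = fun x => fderiv ℝ f x (1, 0) := by
  funext x
  obtain ⟨a, b⟩ := x
  have h1 : HasDerivAt (fun s : ℝ => (s, b)) ((1 : ℝ), (0 : ℝ)) a :=
    (hasDerivAt_id a).prodMk (hasDerivAt_const a b)
  exact ((hf (a, b)).hasFDerivAt.comp_hasDerivAt a h1).deriv

lemma contDiff_pd1 {f : ℝ × ℝ → ℝ} (hf : ContDiff ℝ (⊤ : ℕ∞) f) :
    ContDiff ℝ (⊤ : ℕ∞) (pd1 f) := by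
  rw [pd1_eq_fderiv (hf.differentiable (by simp))]
  exact (hf.fderiv_right (by simp)).clm_apply contDiff_const

lemma pd2_eq_fderiv {f : ℝ × ℝ → ℝ} (hf : Differentiable ℝ f) :
    pd2 f = fun x => fderiv ℝ f x (0, 1) := by
  funext x
  obtain ⟨a, b⟩ := x
  have h1 : HasDerivAt (fun s : ℝ => (a, s)) ((0 : ℝ), (1 : ℝ)) b :=
    (hasDerivAt_const b a).prodMk (hasDerivAt_id b)
  exact ((hf (a, b)).hasFDerivAt.comp_hasDerivAt b h1).deriv

lemma contDiff_pd2 {f : ℝ × ℝ → ℝ} (hf : ContDiff ℝ (⊤ : ℕ∞) f) :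
    ContDiff ℝ (⊤ : ℕ∞) (pd2 f) := by
  rw [pd2_eq_fderiv (hf.differentiable (by simp))]
  exact (hf.fderiv_right (by simp)).clm_apply contDiff_const

lemma pd1_congr_nhds {f g : ℝ × ℝ → ℝ} {x : ℝ × ℝ} (h : f =ᶠ[nhds x] g) :
    pd1 f x = pd1 g x := by
  have ht : Filter.Tendsto (fun s : ℝ => (s, x.2)) (nhds x.1) (nhds x) := by
    have : Filter.Tendsto (fun s : ℝ => (s, x.2)) (nhds x.1) (nhds (x.1, x.2)) :=
      (continuous_id.prodMk continuous_const).tendsto x.1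
    simpa using this
  exact (h.comp_tendsto ht).deriv_eq

lemma pd2_congr_nhds {f g : ℝ × ℝ → ℝ} {x : ℝ × ℝ} (h : f =ᶠ[nhds x] g) :
    pd2 f x = pd2 g x := by
  have ht : Filter.Tendsto (fun s : ℝ => (x.1, s)) (nhds x.2) (nhds x) := by
    have : Filter.Tendsto (fun s : ℝ => (x.1, s)) (nhds x.2) (nhds (x.1, x.2)) :=
      (continuous_const.prodMk continuous_id).tendsto x.2
    simpa using this
  exact (h.comp_tendsto ht).deriv_eq

lemma pd1_eventually_const {f : ℝ × ℝ → ℝ} {x : ℝ × ℝ} {c : ℝ}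
    (hf : f =ᶠ[nhds x] fun _ => c) : pd1 f x = 0 := by
  rw [pd1_congr_nhds hf]; exact deriv_const _ _

lemma pd2_eventually_const {f : ℝ × ℝ → ℝ} {x : ℝ × ℝ} {c : ℝ}
    (hf : f =ᶠ[nhds x] fun _ => c) : pd2 f x = 0 := by
  rw [pd2_congr_nhds hf]; exact deriv_const _ _

lemma pd1_add {f g : ℝ × ℝ → ℝ} (hf : Differentiable ℝ f) (hg : Differentiable ℝ g)
    (x : ℝ × ℝ) : pd1 (fun y => f y + g y) x = pd1 f x + pd1 g x := by
  obtain ⟨a, b⟩ := x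
  exact ((hasDerivAt_slice1 (hf (a, b))).add (hasDerivAt_slice1 (hg (a, b)))).deriv

lemma pd2_add {f g : ℝ × ℝ → ℝ} (hf : Differentiable ℝ f) (hg : Differentiable ℝ g)
    (x : ℝ × ℝ) : pd2 (fun y => f y + g y) x = pd2 f x + pd2 g x := by
  obtain ⟨a, b⟩ := x
  exact ((hasDerivAt_slice2 (hf (a, b))).add (hasDerivAt_slice2 (hg (a, b)))).deriv

lemma pd1_mul_fst {w : ℝ × ℝ → ℝ} (hw : Differentiable ℝ w) (x : ℝ × ℝ) :
    pd1 (fun y => y.1 * w y) x = w x + x.1 * pd1 w x := by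
  obtain ⟨a, b⟩ := x
  have := ((hasDerivAt_id' a).mul (hasDerivAt_slice1 (hw (a, b)))).deriv
  simp [Pi.mul_def] at this
  exact this

lemma pd2_mul_fst {w : ℝ × ℝ → ℝ} (hw : Differentiable ℝ w) (x : ℝ × ℝ) :
    pd2 (fun y => y.1 * w y) x = x.1 * pd2 w x := by
  obtain ⟨a, b⟩ := x
  exact ((hasDerivAt_slice2 (hw (a, b))).const_mul a).deriv

lemma lap_mul_fst {w : ℝ × ℝ → ℝ} (hw : ContDiff ℝ (⊤ : ℕ∞) w) (x : ℝ × ℝ) :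
    lap (fun y => y.1 * w y) x = x.1 * lap w x + 2 * pd1 w x := by
  have hwd : Differentiable ℝ w := hw.differentiable (by simp)
  have hw1 : Differentiable ℝ (pd1 w) := (contDiff_pd1 hw).differentiable (by simp)
  have hw2 : Differentiable ℝ (pd2 w) := (contDiff_pd2 hw).differentiable (by simp)
  have e1 : pd1 (fun y => y.1 * w y) = fun y => w y + y.1 * pd1 w y :=
    funext fun y => pd1_mul_fst hwd y
  have e2 : pd2 (fun y => y.1 * w y) = fun y => y.1 * pd2 w y :=
    funext fun y => pd2_mul_fst hwd y
  have e3 : pd1 (pd1 (fun y => y.1 * w y)) x = pd1 w x + (pd1 w x + x.1 * pd1 (pd1 w) x) := by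
    rw [e1, pd1_add (g := fun y => y.1 * pd1 w y) hwd (differentiable_fst.mul hw1)]
    rw [pd1_mul_fst hw1 x]
  have e4 : pd2 (pd2 (fun y => y.1 * w y)) x = x.1 * pd2 (pd2 w) x := by
    rw [e2, pd2_mul_fst hw2 x]
  simp only [lap, e3, e4]
  ring


noncomputable def qq : ℝ × ℝ → ℝ := fun y => (y.1 ^ 2 + y.2 ^ 2)⁻¹
noncomputable def qq1 : ℝ × ℝ → ℝ := fun y => -(2 * y.1) / (y.1 ^ 2 + y.2 ^ 2) ^ 2
noncomputable def qq2 : ℝ × ℝ → ℝ := fun y => -(2 * y.2) / (y.1 ^ 2 + y.2 ^ 2) ^ 2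

lemma sq_sum_pos {x : ℝ × ℝ} (hx : x ≠ 0) : 0 < x.1 ^ 2 + x.2 ^ 2 := by
  have : x.1 ≠ 0 ∨ x.2 ≠ 0 := by
    by_contra hc; push_neg at hc; exact hx (Prod.ext hc.1 hc.2)
  rcases this with h | h
  · exact add_pos_of_pos_of_nonneg (by positivity) (sq_nonneg _)
  · exact add_pos_of_nonneg_of_pos (sq_nonneg _) (by positivity)

lemma hasDerivAt_sq_add (a b : ℝ) : HasDerivAt (fun s : ℝ => s ^ 2 + b ^ 2) (2 * a) a := by
  simpa [mul_comm] using (hasDerivAt_pow 2 a).add_const (b ^ 2)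

lemma hasDerivAt_qq_slice1 {a b : ℝ} (hd : a ^ 2 + b ^ 2 ≠ 0) :
    HasDerivAt (fun s => qq (s, b)) (-(2 * a) / (a ^ 2 + b ^ 2) ^ 2) a := by
  have := (hasDerivAt_sq_add a b).inv hd
  simpa [qq, div_eq_mul_inv, Pi.inv_def] using this

lemma hasDerivAt_qq_slice2 {a b : ℝ} (hd : a ^ 2 + b ^ 2 ≠ 0) :
    HasDerivAt (fun s => qq (a, s)) (-(2 * b) / (a ^ 2 + b ^ 2) ^ 2) b := by
  have h1 : HasDerivAt (fun s : ℝ => a ^ 2 + s ^ 2) (2 * b) b := by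
    simpa [mul_comm] using (hasDerivAt_pow 2 b).const_add (a ^ 2)
  have := h1.inv hd
  simpa [qq, div_eq_mul_inv, Pi.inv_def] using this

lemma pd1_qq {x : ℝ × ℝ} (hx : x ≠ 0) : pd1 qq x = qq1 x := by
  obtain ⟨a, b⟩ := x
  exact (hasDerivAt_qq_slice1 (ne_of_gt (sq_sum_pos hx))).deriv

lemma pd2_qq {x : ℝ × ℝ} (hx : x ≠ 0) : pd2 qq x = qq2 x := by
  obtain ⟨a, b⟩ := x
  exact (hasDerivAt_qq_slice2 (ne_of_gt (sq_sum_pos hx))).deriv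

lemma pd1_qq1 {x : ℝ × ℝ} (hx : x ≠ 0) :
    pd1 qq1 x = -2 / (x.1 ^ 2 + x.2 ^ 2) ^ 2 + 8 * x.1 ^ 2 / (x.1 ^ 2 + x.2 ^ 2) ^ 3 := by
  obtain ⟨a, b⟩ := x
  have hd : a ^ 2 + b ^ 2 ≠ 0 := ne_of_gt (sq_sum_pos hx)
  have hnum : HasDerivAt (fun s : ℝ => -(2 * s)) (-2) a := by
    simpa [Pi.neg_def] using ((hasDerivAt_id a).const_mul (2 : ℝ)).neg
  have hden : HasDerivAt (fun s : ℝ => (s ^ 2 + b ^ 2) ^ 2)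
      (2 * (a ^ 2 + b ^ 2) ^ 1 * (2 * a)) a := (hasDerivAt_sq_add a b).pow 2
  have hden' : ((a ^ 2 + b ^ 2) ^ 2 : ℝ) ≠ 0 := pow_ne_zero _ hd
  have h := hnum.div hden hden'
  have : pd1 qq1 (a, b) = ((-2) * (a ^ 2 + b ^ 2) ^ 2 -
      -(2 * a) * (2 * (a ^ 2 + b ^ 2) ^ 1 * (2 * a))) / ((a ^ 2 + b ^ 2) ^ 2) ^ 2 := h.deriv
  rw [this]
  field_simp
  ring

lemma pd2_qq2 {x : ℝ × ℝ} (hx : x ≠ 0) :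
    pd2 qq2 x = -2 / (x.1 ^ 2 + x.2 ^ 2) ^ 2 + 8 * x.2 ^ 2 / (x.1 ^ 2 + x.2 ^ 2) ^ 3 := by
  obtain ⟨a, b⟩ := x
  have hd : a ^ 2 + b ^ 2 ≠ 0 := ne_of_gt (sq_sum_pos hx)
  have hnum : HasDerivAt (fun s : ℝ => -(2 * s)) (-2) b := by
    simpa [Pi.neg_def] using ((hasDerivAt_id b).const_mul (2 : ℝ)).neg
  have hden : HasDerivAt (fun s : ℝ => (a ^ 2 + s ^ 2) ^ 2)
      (2 * (a ^ 2 + b ^ 2) ^ 1 * (2 * b)) b := by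
    have h1 : HasDerivAt (fun s : ℝ => a ^ 2 + s ^ 2) (2 * b) b := by
      simpa [mul_comm] using (hasDerivAt_pow 2 b).const_add (a ^ 2)
    exact h1.pow 2
  have hden' : ((a ^ 2 + b ^ 2) ^ 2 : ℝ) ≠ 0 := pow_ne_zero _ hd
  have h := hnum.div hden hden'
  have : pd2 qq2 (a, b) = ((-2) * (a ^ 2 + b ^ 2) ^ 2 -
      -(2 * b) * (2 * (a ^ 2 + b ^ 2) ^ 1 * (2 * b))) / ((a ^ 2 + b ^ 2) ^ 2) ^ 2 := h.deriv
  rw [this]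
  field_simp
  ring

lemma lap_qq {x : ℝ × ℝ} (hx : x ≠ 0) : lap qq x = 4 * qq x ^ 2 := by
  have hopen : IsOpen {y : ℝ × ℝ | y ≠ 0} := isOpen_compl_singleton
  have h1 : pd1 qq =ᶠ[nhds x] qq1 :=
    Filter.eventuallyEq_of_mem (hopen.mem_nhds hx) (fun y hy => pd1_qq hy)
  have h2 : pd2 qq =ᶠ[nhds x] qq2 :=
    Filter.eventuallyEq_of_mem (hopen.mem_nhds hx) (fun y hy => pd2_qq hy)
  have e1 : pd1 (pd1 qq) x = pd1 qq1 x := pd1_congr_nhds h1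
  have e2 : pd2 (pd2 qq) x = pd2 qq2 x := pd2_congr_nhds h2
  have hd : x.1 ^ 2 + x.2 ^ 2 ≠ 0 := ne_of_gt (sq_sum_pos hx)
  rw [lap, e1, e2, pd1_qq1 hx, pd2_qq2 hx]
  show _ = 4 * ((x.1 ^ 2 + x.2 ^ 2)⁻¹) ^ 2
  field_simp
  ring

open MeasureTheory in
set_option synthInstance.maxHeartbeats 1000000 in

lemma aux_hasFDerivAt_param {X : Type*} [NormedAddCommGroup X] [NormedSpace ℝ X]
    [CompleteSpace X] (F : (ℝ × ℝ) × ℝ → X) (hF : ContDiff ℝ (⊤ : ℕ∞) F) (x₀ : ℝ × ℝ) :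
    HasFDerivAt (fun x : ℝ × ℝ => ∫ t in (0:ℝ)..1, F (x, t))
      (∫ t in (0:ℝ)..1, (fderiv ℝ F (x₀, t)).comp (ContinuousLinearMap.inl ℝ (ℝ × ℝ) ℝ)) x₀ := by
  have hFd : Differentiable ℝ F := hF.differentiable (by simp)
  have hFc : Continuous F := hF.continuous
  have hfdc : Continuous (fderiv ℝ F) := (hF.fderiv_right (m := (⊤ : ℕ∞)) (by simp)).continuous
  -- bound on the compact set
  obtain ⟨C, hC⟩ := (isCompact_closedBall x₀ 1 |>.prod (isCompact_uIcc (a := (0:ℝ)) (b := 1))).exists_bound_of_continuousOn hfdc.continuousOn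
  have key := intervalIntegral.hasFDerivAt_integral_of_dominated_of_fderiv_le
    (F := fun (x : ℝ × ℝ) (t : ℝ) => F (x, t))
    (F' := fun (x : ℝ × ℝ) (t : ℝ) => (fderiv ℝ F (x, t)).comp (ContinuousLinearMap.inl ℝ (ℝ × ℝ) ℝ))
    (x₀ := x₀) (a := (0:ℝ)) (b := 1) (μ := volume) (bound := fun _ => C) (s := Metric.ball x₀ 1)
    (Metric.ball_mem_nhds x₀ one_pos)
    (Filter.Eventually.of_forall fun x =>
      ((hFc.comp (continuous_const.prodMk continuous_id)).aestronglyMeasurable))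
    ((hFc.comp (continuous_const.prodMk continuous_id)).intervalIntegrable 0 1)
    (((hfdc.comp (continuous_const.prodMk continuous_id)).clm_comp continuous_const).aestronglyMeasurable)
    ?_ (intervalIntegrable_const) ?_
  · exact key
  · refine Filter.Eventually.of_forall fun t ht x hx => ?_
    have hmem : (x, t) ∈ Metric.closedBall x₀ 1 ×ˢ Set.uIcc (0:ℝ) 1 :=
      ⟨Metric.ball_subset_closedBall hx, Set.uIoc_subset_uIcc ht⟩
    have hinl : ‖ContinuousLinearMap.inl ℝ (ℝ × ℝ) ℝ‖ ≤ 1 := by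
      refine ContinuousLinearMap.opNorm_le_bound _ zero_le_one fun y => ?_
      have : ‖(ContinuousLinearMap.inl ℝ (ℝ × ℝ) ℝ) y‖ = ‖y‖ := by
        simp [Prod.norm_def]
      rw [this, one_mul]
    have hC0 : (0:ℝ) ≤ C :=
      (norm_nonneg _).trans (hC (x₀, 0) ⟨Metric.mem_closedBall_self zero_le_one, Set.left_mem_uIcc⟩)
    calc ‖(fderiv ℝ F (x, t)).comp (ContinuousLinearMap.inl ℝ (ℝ × ℝ) ℝ)‖
        ≤ ‖fderiv ℝ F (x, t)‖ * ‖ContinuousLinearMap.inl ℝ (ℝ × ℝ) ℝ‖ :=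
          ContinuousLinearMap.opNorm_comp_le _ _
      _ ≤ C * 1 := mul_le_mul (hC _ hmem) hinl (norm_nonneg _) hC0
      _ = C := mul_one C
  · refine Filter.Eventually.of_forall fun t ht x hx => ?_
    have h1 : HasFDerivAt (fun x : ℝ × ℝ => (x, t)) (ContinuousLinearMap.inl ℝ (ℝ × ℝ) ℝ) x :=
      hasFDerivAt_prodMk_left x t
    exact (hFd (x, t)).hasFDerivAt.comp x h1

lemma aux_contDiff_param (n : ℕ) : ∀ {X : Type*} [NormedAddCommGroup X] [NormedSpace ℝ X]
    [CompleteSpace X] (F : (ℝ × ℝ) × ℝ → X), ContDiff ℝ (⊤ : ℕ∞) F →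
    ContDiff ℝ (n : ℕ) (fun x : ℝ × ℝ => ∫ t in (0:ℝ)..1, F (x, t)) := by
  induction n with
  | zero =>
    intro X _ _ _ F hF
    rw [show ((0 : ℕ) : WithTop ℕ∞) = 0 by norm_cast, contDiff_zero]
    exact Differentiable.continuous fun x => (aux_hasFDerivAt_param F hF x).differentiableAt
  | succ n ih =>
    intro X _ _ _ F hF
    have hdiff : Differentiable ℝ (fun x : ℝ × ℝ => ∫ t in (0:ℝ)..1, F (x, t)) :=
      fun x => (aux_hasFDerivAt_param F hF x).differentiableAt
    have hG : ContDiff ℝ (⊤ : ℕ∞) (fun z : (ℝ × ℝ) × ℝ =>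
        (fderiv ℝ F z).comp (ContinuousLinearMap.inl ℝ (ℝ × ℝ) ℝ)) :=
      (hF.fderiv_right (m := (⊤ : ℕ∞)) (by simp)).clm_comp contDiff_const
    have hfd : (fderiv ℝ (fun x : ℝ × ℝ => ∫ t in (0:ℝ)..1, F (x, t))) =
        (fun x : ℝ × ℝ => ∫ t in (0:ℝ)..1,
          (fderiv ℝ F (x, t)).comp (ContinuousLinearMap.inl ℝ (ℝ × ℝ) ℝ)) := by
      funext x
      exact (aux_hasFDerivAt_param F hF x).fderiv
    have hcast : ((n + 1 : ℕ) : WithTop ℕ∞) = (n : WithTop ℕ∞) + 1 := by norm_cast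
    rw [hcast, contDiff_succ_iff_fderiv]
    refine ⟨hdiff, by simp, ?_⟩
    rw [hfd]
    exact ih _ hG

lemma contDiff_param {X : Type*} [NormedAddCommGroup X] [NormedSpace ℝ X]
    [CompleteSpace X] (F : (ℝ × ℝ) × ℝ → X) (hF : ContDiff ℝ (⊤ : ℕ∞) F) :
    ContDiff ℝ (⊤ : ℕ∞) (fun x : ℝ × ℝ => ∫ t in (0:ℝ)..1, F (x, t)) := by
  rw [contDiff_infty]
  exact fun n => aux_contDiff_param n F hF

/-- For `a₀ > 0`, a cutoff `χ` as before (smooth, compactly supported,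
`0 ≤ χ ≤ 1`, `χ ≡ 1` near `0`, `∂₁χ(0,x₂) = 0`), and a smooth wave speed `c`
with `0 < c_m ≤ c ≤ c_M`, there is a smooth compactly supported real potential
`V` such that `(−c² Δ + V) u_p = 0` for
`u_p(x) = (1−χ(x)) x₁/|x|² + χ(x) a₀ x₁`: so `−c²Δ + V` has `u_p` as a
`p`-resonant state. -/
theorem stmt7 (a₀ : ℝ) (ha₀ : 0 < a₀) (χ : ℝ × ℝ → ℝ) (hχ : ContDiff ℝ (⊤ : ℕ∞) χ)
    (hsupp : HasCompactSupport χ) (hrange : ∀ x, 0 ≤ χ x ∧ χ x ≤ 1)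
    (hone : ∀ᶠ x in nhds (0 : ℝ × ℝ), χ x = 1)
    (hflat : ∀ x₂ : ℝ, pd1 χ (0, x₂) = 0)
    (c : ℝ × ℝ → ℝ) (hc : ContDiff ℝ (⊤ : ℕ∞) c) (c_m c_M : ℝ) (hcm : 0 < c_m)
    (hbnd : ∀ x, c_m ≤ c x ∧ c x ≤ c_M) :
    ∃ V : ℝ × ℝ → ℝ, ContDiff ℝ (⊤ : ℕ∞) V ∧ HasCompactSupport V ∧
      ∀ x : ℝ × ℝ,
        -(c x) ^ 2 * lap (fun y => (1 - χ y) * (y.1 / (y.1 ^ 2 + y.2 ^ 2)) + χ y * (a₀ * y.1)) x +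
          V x * ((1 - χ x) * (x.1 / (x.1 ^ 2 + x.2 ^ 2)) + χ x * (a₀ * x.1)) = 0 := by
  classical
  have hχd : Differentiable ℝ χ := hχ.differentiable (by simp)
  have hχ0 : χ 0 = 1 := hone.self_of_nhds
  obtain ⟨ε, hε, hball⟩ : ∃ ε > 0, ∀ ⦃y : ℝ × ℝ⦄, dist y 0 < ε → χ y = 1 :=
    Metric.eventually_nhds_iff.mp hone
  have hball' : ∀ y ∈ Metric.ball (0 : ℝ × ℝ) ε, χ y = 1 := fun y hy =>
    hball (Metric.mem_ball.mp hy)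
  have hp : ContDiff ℝ (⊤ : ℕ∞) (pd1 χ) := contDiff_pd1 hχ
  have hpd : Differentiable ℝ (pd1 χ) := hp.differentiable (by simp)
  have hpp : ContDiff ℝ (⊤ : ℕ∞) (pd1 (pd1 χ)) := contDiff_pd1 hp
  have hχ_event : ∀ y ∈ Metric.ball (0 : ℝ × ℝ) ε, χ =ᶠ[nhds y] fun _ => 1 := fun y hy =>
    Filter.eventuallyEq_of_mem (Metric.isOpen_ball.mem_nhds hy) hball'
  have hp_ball : ∀ y ∈ Metric.ball (0 : ℝ × ℝ) ε, pd1 χ y = 0 := fun y hy =>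
    pd1_eventually_const (hχ_event y hy)
  have hpp_ball : ∀ y ∈ Metric.ball (0 : ℝ × ℝ) ε, pd1 (pd1 χ) y = 0 := by
    intro y hy
    exact pd1_eventually_const
      (Filter.eventuallyEq_of_mem (Metric.isOpen_ball.mem_nhds hy) hp_ball)
  -- the Hadamard quotient k with ∂₁χ = x₁ * k
  set k : ℝ × ℝ → ℝ := fun x => ∫ t in (0:ℝ)..1, pd1 (pd1 χ) (t * x.1, x.2) with hk_def
  have hk : ContDiff ℝ (⊤ : ℕ∞) k := by
    have hmap : ContDiff ℝ (⊤ : ℕ∞) (fun z : (ℝ × ℝ) × ℝ => (z.2 * z.1.1, z.1.2)) :=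
      (contDiff_snd.mul (contDiff_fst.fst)).prodMk (contDiff_fst.snd)
    exact contDiff_param _ (hpp.comp hmap)
  have hpk : ∀ x : ℝ × ℝ, pd1 χ x = x.1 * k x := by
    intro x
    rcases eq_or_ne x.1 0 with h1 | h1
    · have hx : x = (0, x.2) := by rw [← h1]
      rw [hx, hflat x.2]; simp
    · have hcont : Continuous fun s => pd1 (pd1 χ) (s, x.2) :=
        hpp.continuous.comp (continuous_id.prodMk continuous_const)
      have hFTC : ∫ s in (0:ℝ)..x.1, pd1 (pd1 χ) (s, x.2)
          = pd1 χ (x.1, x.2) - pd1 χ (0, x.2) :=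
        intervalIntegral.integral_eq_sub_of_hasDerivAt
          (fun s _ => hasDerivAt_slice1 (hpd (s, x.2)))
          ((hcont.intervalIntegrable _ _))
      have hsub : k x = x.1⁻¹ • ∫ s in (0:ℝ)..x.1, pd1 (pd1 χ) (s, x.2) := by
        rw [hk_def]
        have := intervalIntegral.integral_comp_mul_right
          (fun s => pd1 (pd1 χ) (s, x.2)) (a := 0) (b := 1) h1
        simpa using this
      rw [hsub, hFTC, hflat x.2]
      have : pd1 χ (x.1, x.2) = pd1 χ x := by rw [Prod.mk.eta]
      rw [this]
      rw [smul_eq_mul, sub_zero]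
      field_simp
  -- the function h with u = x₁ * h
  set h : ℝ × ℝ → ℝ := fun y => (1 - χ y) * qq y + χ y * a₀ with hh_def
  have hq_at : ∀ y : ℝ × ℝ, y ≠ 0 → ContDiffAt ℝ (⊤ : ℕ∞) qq y := by
    intro y hy
    have hbase : ContDiff ℝ (⊤ : ℕ∞) (fun y : ℝ × ℝ => y.1 ^ 2 + y.2 ^ 2) :=
      (contDiff_fst.pow 2).add (contDiff_snd.pow 2)
    exact hbase.contDiffAt.inv (ne_of_gt (sq_sum_pos hy))
  have h_eq_ball : ∀ y ∈ Metric.ball (0 : ℝ × ℝ) ε, h y = a₀ := by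
    intro y hy
    rw [hh_def]
    simp only [hball' y hy]
    ring
  have hzball : (0 : ℝ × ℝ) ∈ Metric.ball (0 : ℝ × ℝ) ε := Metric.mem_ball_self hε
  have hh : ContDiff ℝ (⊤ : ℕ∞) h := by
    rw [contDiff_iff_contDiffAt]
    intro y
    by_cases hy : y ∈ Metric.ball (0 : ℝ × ℝ) ε
    · exact contDiffAt_const.congr_of_eventuallyEq
        (Filter.eventuallyEq_of_mem (Metric.isOpen_ball.mem_nhds hy) h_eq_ball)
    · have hy0 : y ≠ 0 := fun h0 => hy (h0 ▸ hzball)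
      exact ((contDiffAt_const.sub hχ.contDiffAt).mul (hq_at y hy0)).add
        (hχ.contDiffAt.mul contDiffAt_const)
  have hhd : Differentiable ℝ h := hh.differentiable (by simp)
  have hhpos : ∀ x, 0 < h x := by
    intro x
    rcases eq_or_ne x 0 with rfl | hx
    · have := h_eq_ball 0 hzball
      rw [this]; exact ha₀
    · have hq : 0 < qq x := by
        have := sq_sum_pos hx
        exact inv_pos.mpr this
      obtain ⟨h0, h1⟩ := hrange x
      rw [hh_def]
      rcases lt_or_eq_of_le h1 with hlt | heq
      · have v1 : 0 < (1 - χ x) * qq x := mul_pos (by linarith) hq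
        have v2 : 0 ≤ χ x * a₀ := mul_nonneg h0 ha₀.le
        simp only []
        linarith
      · simp only [← heq]
        nlinarith
  -- u = x₁ * h
  have hufun : (fun y : ℝ × ℝ => (1 - χ y) * (y.1 / (y.1 ^ 2 + y.2 ^ 2)) + χ y * (a₀ * y.1))
      = fun y => y.1 * h y := by
    funext y
    rw [hh_def]
    simp only [qq, div_eq_mul_inv]
    ring
  -- k vanishes on the small ball
  have hk0ball : ∀ y ∈ Metric.ball (0 : ℝ × ℝ) ε, k y = 0 := by
    intro y hy
    have hint : ∀ t ∈ Set.uIcc (0:ℝ) 1, pd1 (pd1 χ) (t * y.1, y.2) = 0 := by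
      intro t ht
      have ht' : |t| ≤ 1 := by
        rw [Set.uIcc_of_le (by norm_num : (0:ℝ) ≤ 1)] at ht
        exact abs_le.mpr ⟨by linarith [ht.1], ht.2⟩
      apply hpp_ball
      have hy1 : |y.1| < ε ∧ |y.2| < ε := by
        have hm := Metric.mem_ball.mp hy
        rw [Prod.dist_eq, max_lt_iff] at hm
        simpa [Real.dist_eq] using hm
      refine Metric.mem_ball.mpr ?_
      rw [Prod.dist_eq, max_lt_iff]
      constructor
      · simp only [Real.dist_eq, Prod.fst_zero, sub_zero]
        calc |t * y.1| = |t| * |y.1| := abs_mul _ _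
          _ ≤ 1 * |y.1| := mul_le_mul_of_nonneg_right ht' (abs_nonneg _)
          _ = |y.1| := one_mul _
          _ < ε := hy1.1
      · simpa [Real.dist_eq] using hy1.2
    calc k y = ∫ t in (0:ℝ)..1, (0:ℝ) := intervalIntegral.integral_congr hint
      _ = 0 := intervalIntegral.integral_zero
  -- G with pd1 h = x₁ * G
  set G : ℝ × ℝ → ℝ := fun x => k x * (a₀ - qq x) + (1 - χ x) * (-2 * qq x ^ 2) with hG_def
  have hG_ball : ∀ y ∈ Metric.ball (0 : ℝ × ℝ) ε, G y = 0 := by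
    intro y hy
    rw [hG_def]
    simp only [hk0ball y hy, hball' y hy]
    ring
  have hGs : ContDiff ℝ (⊤ : ℕ∞) G := by
    rw [contDiff_iff_contDiffAt]
    intro y
    by_cases hy : y ∈ Metric.ball (0 : ℝ × ℝ) ε
    · exact contDiffAt_const.congr_of_eventuallyEq
        (Filter.eventuallyEq_of_mem (Metric.isOpen_ball.mem_nhds hy) hG_ball)
    · have hy0 : y ≠ 0 := fun h0 => hy (h0 ▸ hzball)
      exact (hk.contDiffAt.mul (contDiffAt_const.sub (hq_at y hy0))).add
        ((contDiffAt_const.sub hχ.contDiffAt).mul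
          (contDiffAt_const.mul ((hq_at y hy0).pow 2)))
  have hpd1h : ∀ x : ℝ × ℝ, pd1 h x = x.1 * G x := by
    intro x
    by_cases hx : x ∈ Metric.ball (0 : ℝ × ℝ) ε
    · have e1 : pd1 h x = 0 := pd1_eventually_const
        (Filter.eventuallyEq_of_mem (Metric.isOpen_ball.mem_nhds hx) h_eq_ball)
      rw [e1, hG_ball x hx, mul_zero]
    · have hx0 : x ≠ 0 := fun h0 => hx (h0 ▸ hzball)
      have hpkx := hpk x
      obtain ⟨a, b⟩ := x
      have hd : a ^ 2 + b ^ 2 ≠ 0 := ne_of_gt (sq_sum_pos hx0)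
      have hχs : HasDerivAt (fun s => χ (s, b)) (pd1 χ (a, b)) a :=
        hasDerivAt_slice1 (hχd (a, b))
      have hqs : HasDerivAt (fun s => qq (s, b)) (-(2 * a) / (a ^ 2 + b ^ 2) ^ 2) a :=
        hasDerivAt_qq_slice1 hd
      have hsum : HasDerivAt (fun s => (1 - χ (s, b)) * qq (s, b) + χ (s, b) * a₀)
          (((0 - pd1 χ (a, b)) * qq (a, b)
            + (1 - χ (a, b)) * (-(2 * a) / (a ^ 2 + b ^ 2) ^ 2)) + pd1 χ (a, b) * a₀) a :=
        ((((hasDerivAt_const a (1:ℝ)).sub hχs).mul hqs)).add (hχs.mul_const a₀)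
      have e2 : pd1 h (a, b) = ((0 - pd1 χ (a, b)) * qq (a, b)
            + (1 - χ (a, b)) * (-(2 * a) / (a ^ 2 + b ^ 2) ^ 2)) + pd1 χ (a, b) * a₀ := by
        rw [hh_def]
        exact hsum.deriv
      rw [e2, hG_def, hpkx]
      simp only [qq]
      field_simp
      ring
  -- lap of u
  have hlapu : ∀ x : ℝ × ℝ, lap (fun y : ℝ × ℝ =>
      (1 - χ y) * (y.1 / (y.1 ^ 2 + y.2 ^ 2)) + χ y * (a₀ * y.1)) x
      = x.1 * (lap h x + 2 * G x) := by
    intro x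
    rw [hufun, lap_mul_fst hh x, hpd1h x]
    ring
  -- the potential's numerator g
  set g : ℝ × ℝ → ℝ := fun x => lap h x + 2 * G x with hg_def
  have hlaph : ContDiff ℝ (⊤ : ℕ∞) (fun x => lap h x) :=
    (contDiff_pd1 (contDiff_pd1 hh)).add (contDiff_pd2 (contDiff_pd2 hh))
  have hgs : ContDiff ℝ (⊤ : ℕ∞) g := hlaph.add (contDiff_const.mul hGs)
  -- compact support of g
  obtain ⟨R, hR⟩ : ∃ R, tsupport χ ⊆ Metric.closedBall (0 : ℝ × ℝ) R :=
    (Metric.isBounded_iff_subset_closedBall 0).mp hsupp.isBounded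
  have hR0 : (0 : ℝ × ℝ) ∈ Metric.closedBall (0 : ℝ × ℝ) R := by
    apply hR
    apply subset_tsupport
    simp only [Function.mem_support, hχ0]
    norm_num
  have hWopen : IsOpen (Metric.closedBall (0 : ℝ × ℝ) R)ᶜ := Metric.isClosed_closedBall.isOpen_compl
  have hχW : ∀ y ∈ (Metric.closedBall (0 : ℝ × ℝ) R)ᶜ, χ y = 0 := fun y hy =>
    image_eq_zero_of_notMem_tsupport (fun hm => hy (hR hm))
  have hpW : ∀ y ∈ (Metric.closedBall (0 : ℝ × ℝ) R)ᶜ, pd1 χ y = 0 := by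
    intro y hy
    exact pd1_eventually_const (Filter.eventuallyEq_of_mem (hWopen.mem_nhds hy) hχW)
  have hppW : ∀ y ∈ (Metric.closedBall (0 : ℝ × ℝ) R)ᶜ, pd1 (pd1 χ) y = 0 := by
    intro y hy
    exact pd1_eventually_const (Filter.eventuallyEq_of_mem (hWopen.mem_nhds hy) hpW)
  have hkW : ∀ y ∈ (Metric.closedBall (0 : ℝ × ℝ) R)ᶜ, k y = 0 := by
    intro y hy
    rcases eq_or_ne y.1 0 with h1 | h1
    · have : k y = ∫ t in (0:ℝ)..1, pd1 (pd1 χ) (0, y.2) := by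
        rw [hk_def]
        simp only [h1, mul_zero]
      rw [this, intervalIntegral.integral_const]
      have hy02 : (0, y.2) = y := by rw [← h1]
      rw [hy02, hppW y hy]
      simp
    · have := hpk y
      rw [hpW y hy] at this
      rcases mul_eq_zero.mp this.symm with h | h
      · exact absurd h h1
      · exact h
  have hhW : ∀ y ∈ (Metric.closedBall (0 : ℝ × ℝ) R)ᶜ, h y = qq y := by
    intro y hy
    rw [hh_def]
    simp only [hχW y hy]
    ring
  have hgW : ∀ y ∈ (Metric.closedBall (0 : ℝ × ℝ) R)ᶜ, g y = 0 := by
    intro y hy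
    have hy0 : y ≠ 0 := by
      intro h0
      rw [h0] at hy
      exact hy hR0
    have hhq : h =ᶠ[nhds y] qq :=
      Filter.eventuallyEq_of_mem (hWopen.mem_nhds hy) hhW
    have e1 : lap h y = lap qq y := by
      have p1 : pd1 h =ᶠ[nhds y] pd1 qq := by
        refine Filter.eventuallyEq_of_mem (hWopen.mem_nhds hy) (fun z hz => ?_)
        exact pd1_congr_nhds (Filter.eventuallyEq_of_mem (hWopen.mem_nhds hz) hhW)
      have p2 : pd2 h =ᶠ[nhds y] pd2 qq := by
        refine Filter.eventuallyEq_of_mem (hWopen.mem_nhds hy) (fun z hz => ?_)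
        exact pd2_congr_nhds (Filter.eventuallyEq_of_mem (hWopen.mem_nhds hz) hhW)
      rw [lap, lap, pd1_congr_nhds p1, pd2_congr_nhds p2]
    rw [hg_def]
    simp only [e1, lap_qq hy0, hG_def, hkW y hy, hχW y hy]
    ring
  have hgsupp : HasCompactSupport g :=
    HasCompactSupport.intro (isCompact_closedBall (0:ℝ×ℝ) R) hgW
  -- the potential V
  refine ⟨fun x => c x ^ 2 * g x / h x, ?_, ?_, ?_⟩
  · exact ((hc.pow 2).mul hgs).div hh (fun x => ne_of_gt (hhpos x))
  · refine HasCompactSupport.intro (isCompact_closedBall (0:ℝ×ℝ) R) ?_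
    intro y hy
    rw [hgW y hy]
    simp
  · intro x
    have hu : (1 - χ x) * (x.1 / (x.1 ^ 2 + x.2 ^ 2)) + χ x * (a₀ * x.1) = x.1 * h x :=
      congrFun hufun x
    rw [hlapu x, hu]
    have hhx := ne_of_gt (hhpos x)
    field_simp
    ring
end
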